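/- arXiv:2311.05721 — 4 statements merged into one kernel-verified Lean document; each statement's English description precedes it below -/
import Mathlib

section
/- Let G be a group and A a finite subset of G containing the identity such that A is a weakly approximate group with constant L_A (i.e. A⁻¹A is covered by L_A left translates of A) and A⁻¹ is a weakly approximate group with constant L_{A⁻¹} (i.e. AA⁻¹ is covered by L_{A⁻¹} left translates of A⁻¹). Then B = A⁻¹ ∪ A is a symmetric weakly approximate group whose constant satisfies L_B ≤ 2·L_A·L_{A⁻¹} + L_A + L_{A⁻¹}. -/
open Pointwise

/-- A finite subset `A` of a group `G` containing the identity is a weakly approximate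
group with constant `L` if `A⁻¹ * A` is covered by `L` left translates of `A`. -/
def IsWeakApproxGroup {G : Type*} [Group G] (A : Set G) (L : ℕ) : Prop :=
  A.Finite ∧ 1 ∈ A ∧ ∃ g : Fin L → G, A⁻¹ * A ⊆ ⋃ i, g i • A

theorem stmt0 {G : Type*} [Group G] (A : Set G) (LA LA' : ℕ)
    (hA : IsWeakApproxGroup A LA) (hA' : IsWeakApproxGroup A⁻¹ LA') :
    (A⁻¹ ∪ A) = (A⁻¹ ∪ A)⁻¹ ∧
      ∃ LB ≤ 2 * LA * LA' + LA + LA', IsWeakApproxGroup (A⁻¹ ∪ A) LB := by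
  obtain ⟨hfin, hone, g, hg⟩ := hA
  obtain ⟨hfin', hone', h, hh⟩ := hA'
  rw [inv_inv] at hh
  have hone'' : (1 : G) ∈ A⁻¹ := by rw [Set.mem_inv, inv_one]; exact hone
  constructor
  · ext x; simp only [Set.mem_inv, Set.mem_union, inv_inv]; tauto
  set B : Set G := A⁻¹ ∪ A with hBdef
  let I := (Fin LA' × Fin LA) ⊕ (Fin LA × Fin LA') ⊕ Fin LA ⊕ Fin LA'
  let F : I → G := fun p => match p with
    | .inl (j, i) => h j * g i
    | .inr (.inl (i, j)) => g i * h j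
    | .inr (.inr (.inl i)) => g i
    | .inr (.inr (.inr j)) => h j
  have hcard : Fintype.card I = 2 * LA * LA' + LA + LA' := by
    simp only [I, Fintype.card_sum, Fintype.card_prod, Fintype.card_fin]
    ring
  let e : I ≃ Fin (2 * LA * LA' + LA + LA') := Fintype.equivFinOfCardEq hcard
  have key : B⁻¹ * B ⊆ ⋃ p : I, F p • B := by
    rintro x ⟨u, hu, v, hv, rfl⟩
    rw [Set.mem_inv, hBdef, Set.mem_union, Set.mem_inv, inv_inv] at hu
    have hu' : u ∈ A ∨ u ∈ A⁻¹ := hu.imp id Set.mem_inv.2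
    rcases hv with hv | hv
    · -- v ∈ A⁻¹
      rcases hu' with hu | hu
      · -- u ∈ A, v ∈ A⁻¹ : u*v ∈ A * A⁻¹
        have : u * v ∈ A * A⁻¹ := Set.mul_mem_mul hu hv
        obtain ⟨j, hj⟩ := Set.mem_iUnion.1 (hh this)
        obtain ⟨c, hc, hcv⟩ := hj
        refine Set.mem_iUnion.2 ⟨.inr (.inr (.inr j)), ?_⟩
        exact ⟨c, Or.inl hc, hcv⟩
      · -- u ∈ A⁻¹, v ∈ A⁻¹ : u ∈ A⁻¹ * A (u = u * 1)
        have hu2 : u ∈ A⁻¹ * A := by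
          have := Set.mul_mem_mul hu hone
          simpa using this
        obtain ⟨i, hi⟩ := Set.mem_iUnion.1 (hg hu2)
        obtain ⟨d, hd, hdu⟩ := hi
        -- u = g i * d, d ∈ A ; d * v ∈ A * A⁻¹
        have hdv : d * v ∈ A * A⁻¹ := Set.mul_mem_mul hd hv
        obtain ⟨j, hj⟩ := Set.mem_iUnion.1 (hh hdv)
        obtain ⟨c, hc, hcv⟩ := hj
        refine Set.mem_iUnion.2 ⟨.inr (.inl (i, j)), ?_⟩
        refine ⟨c, Or.inl hc, ?_⟩
        simp only [smul_eq_mul] at hdu hcv ⊢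
        rw [mul_assoc, hcv, ← mul_assoc, hdu]
    · -- v ∈ A
      rcases hu' with hu | hu
      · -- u ∈ A, v ∈ A : u ∈ A * A⁻¹
        have hu2 : u ∈ A * A⁻¹ := by
          have := Set.mul_mem_mul hu hone''
          simpa using this
        obtain ⟨j, hj⟩ := Set.mem_iUnion.1 (hh hu2)
        obtain ⟨c, hc, hcu⟩ := hj
        have hcv : c * v ∈ A⁻¹ * A := Set.mul_mem_mul hc hv
        obtain ⟨i, hi⟩ := Set.mem_iUnion.1 (hg hcv)
        obtain ⟨d, hd, hdv⟩ := hi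
        refine Set.mem_iUnion.2 ⟨.inl (j, i), ?_⟩
        refine ⟨d, Or.inr hd, ?_⟩
        simp only [smul_eq_mul] at hcu hdv ⊢
        rw [mul_assoc, hdv, ← mul_assoc, hcu]
      · -- u ∈ A⁻¹, v ∈ A : u * v ∈ A⁻¹ * A
        have : u * v ∈ A⁻¹ * A := Set.mul_mem_mul hu hv
        obtain ⟨i, hi⟩ := Set.mem_iUnion.1 (hg this)
        obtain ⟨d, hd, hdv⟩ := hi
        refine Set.mem_iUnion.2 ⟨.inr (.inr (.inl i)), ?_⟩
        exact ⟨d, Or.inr hd, hdv⟩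
  refine ⟨2 * LA * LA' + LA + LA', le_refl _, hfin.inv.union hfin, Or.inr hone,
    F ∘ e.symm, ?_⟩
  intro x hx
  obtain ⟨p, hp⟩ := Set.mem_iUnion.1 (key hx)
  exact Set.mem_iUnion.2 ⟨e p, by simpa using hp⟩
end

section
/- Let (X,d_X) and (Y,d_Y) be compact metric spaces, ε > 0, and f : X → Y a continuous ε-embedding (i.e. diam(f⁻¹({y})) < ε for every y ∈ Y). Then there exists δ > 0 such that every continuous map g : X → Y with sup_{x∈X} d_Y(f(x), g(x)) < δ is also an ε-embedding. -/
lemma diam_lt_of_compact_of_forall_lt {X : Type*} [MetricSpace X] {s : Set X} {ε : ℝ}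
    (hs : IsCompact s) (hε : 0 < ε) (h : ∀ x ∈ s, ∀ y ∈ s, dist x y < ε) :
    Metric.diam s < ε := by
  rcases s.eq_empty_or_nonempty with rfl | ⟨x, hx⟩
  · simpa using hε
  · obtain ⟨p, hp, hmax⟩ := (hs.prod hs).exists_isMaxOn ⟨(x, x), ⟨hx, hx⟩⟩
      ((continuous_dist.comp (continuous_fst.prodMk continuous_snd)).continuousOn)
    have hdiam : Metric.diam s ≤ dist p.1 p.2 := by
      apply Metric.diam_le_of_forall_dist_le dist_nonneg
      intro a ha b hb
      exact hmax (Set.mk_mem_prod ha hb)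
    exact lt_of_le_of_lt hdiam (h p.1 hp.1 p.2 hp.2)

theorem stmt4 {X Y : Type*} [MetricSpace X] [MetricSpace Y]
    [CompactSpace X] [CompactSpace Y] (ε : ℝ) (hε : 0 < ε)
    (f : X → Y) (hf : Continuous f)
    (hemb : ∀ y : Y, Metric.diam (f ⁻¹' {y}) < ε) :
    ∃ δ > 0, ∀ g : X → Y, Continuous g →
      (∀ x, dist (f x) (g x) < δ) → ∀ y : Y, Metric.diam (g ⁻¹' {y}) < ε := by
  set A : Set (X × X) := {p | ε ≤ dist p.1 p.2} with hA
  have hAclosed : IsClosed A :=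
    isClosed_le continuous_const (continuous_dist.comp (continuous_fst.prodMk continuous_snd))
  have hAcompact : IsCompact A := hAclosed.isCompact
  rcases A.eq_empty_or_nonempty with hAe | hAne
  · refine ⟨1, one_pos, fun g hg hdist y => ?_⟩
    apply diam_lt_of_compact_of_forall_lt ((isClosed_singleton.preimage hg).isCompact) hε
    intro a ha b hb
    by_contra hcon
    exact (Set.eq_empty_iff_forall_notMem.mp hAe (a, b)) (not_lt.mp hcon)
  · obtain ⟨p₀, hp₀, hmin⟩ := hAcompact.exists_isMinOn hAne
      ((continuous_dist.comp ((hf.comp continuous_fst).prodMk (hf.comp continuous_snd))).continuousOn)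
    set c : ℝ := dist (f p₀.1) (f p₀.2) with hc
    have hcpos : 0 < c := by
      rcases lt_or_eq_of_le (dist_nonneg : (0:ℝ) ≤ c) with h | h
      · exact h
      · exfalso
        have hfeq : f p₀.1 = f p₀.2 := dist_eq_zero.mp h.symm
        have h1 : p₀.1 ∈ f ⁻¹' {f p₀.2} := by simp [hfeq]
        have h2 : p₀.2 ∈ f ⁻¹' {f p₀.2} := by simp
        have := Metric.dist_le_diam_of_mem
          ((isClosed_singleton.preimage hf).isCompact.isBounded) h1 h2
        exact absurd (lt_of_le_of_lt this (hemb _)) (not_lt.mpr hp₀)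
    refine ⟨c / 2, by positivity, fun g hg hdist y => ?_⟩
    apply diam_lt_of_compact_of_forall_lt ((isClosed_singleton.preimage hg).isCompact) hε
    intro a ha b hb
    by_contra hcon
    have hab : (a, b) ∈ A := not_lt.mp hcon
    have h1 : c ≤ dist (f a) (f b) := hmin hab
    have h2 : dist (f a) (f b) ≤ dist (f a) (g a) + dist (g b) (f b) := by
      have : g a = g b := by
        simp only [Set.mem_preimage, Set.mem_singleton_iff] at ha hb
        rw [ha, hb]
      calc dist (f a) (f b) ≤ dist (f a) (g a) + dist (g a) (f b) := dist_triangle _ _ _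
        _ = dist (f a) (g a) + dist (g b) (f b) := by rw [this, dist_comm]
    have h3 : dist (f a) (g a) < c / 2 := hdist a
    have h4 : dist (g b) (f b) < c / 2 := by rw [dist_comm]; exact hdist b
    linarith
end

section
/- Let G be a countable group acting by homeomorphisms on a compact metric space X, and suppose (X,G) satisfies (TSBP ≤ d) for some natural number d, i.e. the boundary sets ∂U₀ arising in the definition satisfy: for every d+1 distinct group elements γ₀,…,γ_d, the intersection ⋂ᵢ γᵢ∂U₀ is empty. Then for any such boundary set B = ∂U₀, the upper Banach density of B is zero: for every ε > 0 there is a finite set F ⊆ G with sup_{x∈X} (1/|F|) Σ_{s∈F} 1_B(sx) < ε. -/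
open Pointwise
open scoped Classical

/-- `B` is `(G, d)`-disjoint: any `d + 1` pairwise distinct group elements translate
`B` to sets with empty intersection. -/
def GdDisjoint (G : Type*) {X : Type*} [Group G] [MulAction G X] (d : ℕ) (B : Set X) : Prop :=
  ∀ g : Fin (d + 1) → G, Function.Injective g → (⋂ i, g i • B) = ∅

lemma filter_card_le {G X : Type*} [Group G] [MulAction G X]
    (d : ℕ) (B : Set X) (hB : GdDisjoint G d B) (F : Finset G) (x : X) :
    (F.filter fun s => s • x ∈ B).card ≤ d := by
  by_contra h
  push_neg at h
  obtain ⟨t, ht, htc⟩ := Finset.exists_subset_card_eq (n := d + 1) h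
  have e : t ≃ Fin (d + 1) := t.equivFin.trans (finCongr htc)
  set g : Fin (d + 1) → G := fun i => ((e.symm i : G))⁻¹ with hg
  have hginj : Function.Injective g := fun i j hij => by
    apply e.symm.injective
    exact Subtype.ext (inv_injective hij)
  have : x ∈ ⋂ i, g i • B := by
    refine Set.mem_iInter.2 fun i => ?_
    rw [hg]
    rw [Set.mem_inv_smul_set_iff]
    have := ht (e.symm i).2
    simpa using (Finset.mem_filter.1 this).2
  rw [hB g hginj] at this
  exact this

theorem stmt11 {G X : Type*} [Group G] [Countable G] [Infinite G]
    [MetricSpace X] [CompactSpace X] [MulAction G X] [ContinuousConstSMul G X]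
    (d : ℕ) (B : Set X) (hB : GdDisjoint G d B) :
    ∀ ε > (0 : ℝ), ∃ F : Finset G, F.Nonempty ∧
      ∀ x : X, ((F.filter fun s => s • x ∈ B).card : ℝ) / (F.card : ℝ) < ε := by
  intro ε hε
  obtain ⟨n, hn⟩ := exists_nat_gt ((d : ℝ) / ε)
  obtain ⟨F, hF⟩ := Infinite.exists_subset_card_eq G (n + 1)
  refine ⟨F, Finset.card_pos.1 (by rw [hF]; exact Nat.succ_pos n), fun x => ?_⟩
  have hcard : (0 : ℝ) < (F.card : ℝ) := by rw [hF]; positivity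
  rw [div_lt_iff₀ hcard]
  calc ((F.filter fun s => s • x ∈ B).card : ℝ) ≤ (d : ℝ) := by
        exact_mod_cast filter_card_le d B hB F x
    _ < ε * F.card := by
        rw [div_lt_iff₀ hε] at hn
        calc (d : ℝ) < ε * n := by linarith
          _ ≤ ε * F.card := by
              apply mul_le_mul_of_nonneg_left _ (le_of_lt hε)
              rw [hF]; push_cast; linarith
end

section
/- Let (X, G) be a topological dynamical system with shapes: suppose {U_i : 0 ≤ i ≤ D} are open subsets of X and F ⊆ G is a finite set such that ⋃_{i=0}^{D} F·U_i = X and, for each i, the closure of U_i is (F', 1)-disjoint, where F' ⊇ F·F (i.e. every product of two elements of F lies in F'). If some x ∈ X satisfies gx = x for some g ∈ F with g ≠ e, then we reach a contradiction. Hence: if (X,G) has finite strong Rokhlin dimension with respect to a Følner sequence {F_n} exhausting G, then the action G ↷ X is free. -/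
open Pointwise

theorem stmt14 {G X : Type*} [Group G] [Countable G] [MetricSpace X] [CompactSpace X]
    [MulAction G X] [ContinuousConstSMul G X]
    (F : ℕ → Finset G) (hmono : Monotone F) (hone : ∀ n, (1 : G) ∈ F n)
    (hexh : ∀ g : G, ∃ n, g ∈ F n) (D : ℕ)
    (hsRok : ∀ n : ℕ, ∃ n' ≥ n, ∃ U : Fin (D + 1) → Set X,
      (∀ i, IsOpen (U i)) ∧
      ((F n : Set G) * (F n : Set G) ⊆ (F n' : Set G)) ∧
      (∀ i, ∀ g₁ ∈ F n', ∀ g₂ ∈ F n', g₁ ≠ g₂ →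
        Disjoint (g₁ • closure (U i)) (g₂ • closure (U i))) ∧
      (⋃ i, (F n : Set G) • U i) = Set.univ) :
    ∀ (g : G) (x : X), g • x = x → g = 1 := by
  intro g x hgx
  by_contra hg
  obtain ⟨n, hgn⟩ := hexh g
  obtain ⟨n', hn', U, hopen, hFF, hdisj, hcov⟩ := hsRok n
  have hx : x ∈ ⋃ i, (F n : Set G) • U i := by rw [hcov]; trivial
  obtain ⟨s, ⟨i, rfl⟩, hxs⟩ := hx
  obtain ⟨h, hh, u, hu, rfl⟩ := hxs
  have hhF : h ∈ F n' := by
    have := hFF (Set.mul_mem_mul hh (Finset.mem_coe.mpr (hone n)))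
    rwa [mul_one] at this
  have hghF : g * h ∈ F n' := hFF (Set.mul_mem_mul (Finset.mem_coe.mpr hgn) hh)
  have hne : g * h ≠ h := fun e => hg (mul_eq_right.mp e)
  have := hdisj i (g * h) hghF h hhF hne
  have h1 : h • u ∈ (g * h) • closure (U i) := by
    refine ⟨u, subset_closure hu, ?_⟩
    show (g * h) • u = h • u
    rw [mul_smul]; exact hgx
  have h2 : h • u ∈ h • closure (U i) := ⟨u, subset_closure hu, rfl⟩
  exact Set.disjoint_left.mp this h1 h2
end
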